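/- For every κ > 0 there is a constant C = C(κ) > 0 such that for all β > 0 and N ≥ 2 with βN ≤ κ, the ratio of partition functions satisfies Z_{β,N−1} / Z_{β,N} ≤ C. -/

import Mathlib

open MeasureTheory Real Filter Finset

noncomputable section

/-- The unnormalized density of the beta ensemble with potential `V`,
inverse temperature `β` and `N` particles. -/
def betaWeight (V : ℝ → ℝ) (β : ℝ) (N : ℕ) (lam : Fin N → ℝ) : ℝ :=
  (∏ i : Fin N, ∏ j ∈ Finset.Ioi i, |lam j - lam i| ^ β) * Real.exp (- ∑ i, V (lam i))

/-- The partition function `Z_{β,N}`. -/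
def Zpart (V : ℝ → ℝ) (β : ℝ) (N : ℕ) : ℝ :=
  ∫ lam : Fin N → ℝ, betaWeight V β N lam

namespace BetaAux

lemma betaWeight_nonneg (V : ℝ → ℝ) (β : ℝ) (N : ℕ) (lam : Fin N → ℝ) :
    0 ≤ betaWeight V β N lam := by
  unfold betaWeight
  apply mul_nonneg _ (Real.exp_nonneg _)
  exact Finset.prod_nonneg fun i _ => Finset.prod_nonneg fun j _ =>
    Real.rpow_nonneg (abs_nonneg _) _

lemma measurable_betaWeight (V : ℝ → ℝ) (hV : Measurable V) (β : ℝ) (N : ℕ) :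
    Measurable (betaWeight V β N) := by
  unfold betaWeight
  apply Measurable.mul
  · apply Finset.measurable_prod
    intro i _
    apply Finset.measurable_prod
    intro j _
    exact (((measurable_pi_apply j).sub (measurable_pi_apply i)).abs).pow measurable_const
  · exact (Finset.measurable_sum _ fun i _ => hV.comp (measurable_pi_apply i)).neg.exp

/-- Splitting off the last index from the pair product. -/
lemma prod_Ioi_castSucc {M : Type*} [CommMonoid M] (n : ℕ) (i : Fin n)
    (h : Fin (n + 1) → M) :
    ∏ j ∈ Finset.Ioi i.castSucc, h j =
      (∏ j ∈ Finset.Ioi i, h j.castSucc) * h (Fin.last n) := by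
  have hset : Finset.Ioi i.castSucc
      = insert (Fin.last n) ((Finset.Ioi i).map ⟨Fin.castSucc, Fin.castSucc_injective n⟩) := by
    ext j
    simp only [Finset.mem_Ioi, Finset.mem_insert, Finset.mem_map,
      Function.Embedding.coeFn_mk]
    constructor
    · intro hj
      induction j using Fin.lastCases with
      | last => exact Or.inl rfl
      | cast j' => exact Or.inr ⟨j', Fin.castSucc_lt_castSucc_iff.mp hj, rfl⟩
    · rintro (rfl | ⟨j', hj', rfl⟩)
      · exact Fin.castSucc_lt_last i
      · exact Fin.castSucc_lt_castSucc_iff.mpr hj'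
  rw [hset, Finset.prod_insert, Finset.prod_map]
  · simp only [Function.Embedding.coeFn_mk]
    exact mul_comm _ _
  · simp only [Finset.mem_map, Function.Embedding.coeFn_mk]
    rintro ⟨j', _, hj'⟩
    exact (Fin.castSucc_lt_last j').ne hj'

lemma pairProd_split {M : Type*} [CommMonoid M] (n : ℕ) (f : Fin (n + 1) → Fin (n + 1) → M) :
    ∏ i : Fin (n + 1), ∏ j ∈ Finset.Ioi i, f i j =
      ((∏ i : Fin n, ∏ j ∈ Finset.Ioi i, f i.castSucc j.castSucc) *
        ∏ i : Fin n, f i.castSucc (Fin.last n)) := by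
  rw [Fin.prod_univ_castSucc]
  have hlast : Finset.Ioi (Fin.last n) = (∅ : Finset (Fin (n + 1))) := by
    ext j
    simp [Finset.mem_Ioi, not_lt.mpr (Fin.le_last j : j ≤ Fin.last n)]
  rw [hlast, Finset.prod_empty, mul_one]
  rw [← Finset.prod_mul_distrib]
  apply Finset.prod_congr rfl
  intro i _
  exact prod_Ioi_castSucc n i _

lemma betaWeight_snoc (V : ℝ → ℝ) (β : ℝ) (n : ℕ) (y : Fin n → ℝ) (x : ℝ) :
    betaWeight V β (n + 1) (Fin.snoc y x) =
      betaWeight V β n y * ((∏ i : Fin n, |x - y i| ^ β) * Real.exp (-(V x))) := by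
  unfold betaWeight
  rw [pairProd_split, Fin.sum_univ_castSucc]
  simp only [Fin.snoc_castSucc, Fin.snoc_last]
  rw [neg_add, Real.exp_add]
  ring

noncomputable def nlog (lam x : ℝ) : ℝ := max (-Real.log |x - lam|) 0

lemma nlog_nonneg (lam x : ℝ) : 0 ≤ nlog lam x := le_max_right _ _

lemma measurable_nlog (lam : ℝ) : Measurable (nlog lam) := by
  unfold nlog
  exact ((Real.measurable_log.comp ((measurable_id.sub_const lam).abs)).neg).max measurable_const

lemma lintegral_nlog_le (lam : ℝ) :
    ∫⁻ x in Set.Icc (0:ℝ) 1, ENNReal.ofReal (nlog lam x) ≤ ENNReal.ofReal 2 := by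
  rw [lintegral_eq_lintegral_meas_lt _ (Eventually.of_forall fun x => nlog_nonneg lam x)
    (measurable_nlog lam).aemeasurable]
  have hbd : ∀ t ∈ Set.Ioi (0:ℝ),
      (volume.restrict (Set.Icc (0:ℝ) 1)) {a | t < nlog lam a}
        ≤ ENNReal.ofReal (2 * Real.exp (-t)) := by
    intro t ht
    have hsub : {a : ℝ | t < nlog lam a} ⊆ Metric.ball lam (Real.exp (-t)) := by
      intro a ha
      have ha' : t < -Real.log |a - lam| := by
        have ha2 : t < max (-Real.log |a - lam|) 0 := ha
        rcases lt_max_iff.mp ha2 with h | h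
        · exact h
        · exact absurd h (not_lt.mpr ht.le)
      have hlog : Real.log |a - lam| < -t := by linarith
      have : |a - lam| < Real.exp (-t) := by
        rcases eq_or_lt_of_le (abs_nonneg (a - lam)) with h0 | h0
        · rw [← h0]; exact Real.exp_pos _
        · exact (Real.log_lt_iff_lt_exp h0).mp hlog
      simpa [Metric.mem_ball, Real.dist_eq]
    calc (volume.restrict (Set.Icc (0:ℝ) 1)) {a | t < nlog lam a}
        ≤ volume {a | t < nlog lam a} := Measure.restrict_le_self _
      _ ≤ volume (Metric.ball lam (Real.exp (-t))) := measure_mono hsub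
      _ = ENNReal.ofReal (2 * Real.exp (-t)) := Real.volume_ball _ _
  calc ∫⁻ t in Set.Ioi (0:ℝ), (volume.restrict (Set.Icc (0:ℝ) 1)) {a | t < nlog lam a}
      ≤ ∫⁻ t in Set.Ioi (0:ℝ), ENNReal.ofReal (2 * Real.exp (-t)) := by
        apply setLIntegral_mono' measurableSet_Ioi hbd
    _ = ENNReal.ofReal 2 * ∫⁻ t in Set.Ioi (0:ℝ), ENNReal.ofReal (Real.exp (-t)) := by
        rw [← lintegral_const_mul' _ _ ENNReal.ofReal_ne_top]
        congr 1 with t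
        rw [← ENNReal.ofReal_mul (by norm_num)]
    _ = ENNReal.ofReal 2 * ENNReal.ofReal 1 := by
        congr 1
        rw [← ofReal_integral_eq_lintegral_ofReal]
        · rw [integral_exp_neg_Ioi_zero]
        · exact (by simpa using exp_neg_integrableOn_Ioi 0 one_pos :
            IntegrableOn (fun x : ℝ => Real.exp (-x)) (Set.Ioi 0) volume)
        · exact Eventually.of_forall fun x => (Real.exp_pos _).le
    _ ≤ ENNReal.ofReal 2 := by
        rw [ENNReal.ofReal_one, mul_one]

lemma exists_delta (V : ℝ → ℝ) (hV : Measurable V) :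
    ∃ δ : ℝ, 0 < δ ∧
      volume ({x : ℝ | Real.exp (-V x) < δ} ∩ Set.Icc (0:ℝ) 1) ≤ ENNReal.ofReal (1/4) := by
  set A : ℕ → Set ℝ := fun k => {x : ℝ | Real.exp (-V x) < 1/(k+1)} ∩ Set.Icc (0:ℝ) 1 with hA
  have hmeas : ∀ k, MeasurableSet (A k) := by
    intro k
    exact ((measurableSet_lt (hV.neg.exp) measurable_const)).inter measurableSet_Icc
  have hanti : Antitone A := by
    intro k l hkl
    apply Set.inter_subset_inter_left
    intro x hx
    have hx' : Real.exp (-V x) < 1/((l:ℝ)+1) := hx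
    have hcast : (k:ℝ) ≤ (l:ℝ) := Nat.cast_le.mpr hkl
    have hle : 1/((l:ℝ)+1) ≤ 1/((k:ℝ)+1) :=
      one_div_le_one_div_of_le (by positivity) (by linarith)
    exact lt_of_lt_of_le hx' hle
  have hempty : ⋂ k, A k = ∅ := by
    ext x
    simp only [Set.mem_iInter, Set.mem_empty_iff_false, iff_false]
    intro h
    obtain ⟨k, hk⟩ := exists_nat_one_div_lt (Real.exp_pos (-V x))
    exact absurd ((h k).1) (not_lt.mpr hk.le)
  have hfin : ∃ k, volume (A k) ≠ ⊤ := by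
    refine ⟨0, ?_⟩
    have : volume (A 0) ≤ volume (Set.Icc (0:ℝ) 1) :=
      measure_mono Set.inter_subset_right
    rw [Real.volume_Icc] at this
    exact (lt_of_le_of_lt this (by norm_num)).ne
  have htend := MeasureTheory.tendsto_measure_iInter_atTop
    (fun k => (hmeas k).nullMeasurableSet) hanti hfin
  rw [hempty] at htend
  simp only [measure_empty] at htend
  have : ∀ᶠ k in atTop, volume (A k) < ENNReal.ofReal (1/4) :=
    htend.eventually_lt_const (by norm_num)
  obtain ⟨k, hk⟩ := this.exists
  exact ⟨1/(k+1), by positivity, hk.le⟩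

lemma measurable_snocmap (n : ℕ) :
    Measurable (fun p : ℝ × (Fin n → ℝ) => (Fin.snoc p.2 p.1 : Fin (n+1) → ℝ)) := by
  apply measurable_pi_iff.mpr
  intro j
  induction j using Fin.lastCases with
  | last => simpa [Fin.snoc_last] using measurable_fst
  | cast i => simpa [Fin.snoc_castSucc, Function.comp_def] using (measurable_pi_apply i).comp measurable_snd

lemma L_step (V : ℝ → ℝ) (hV : Measurable V) (β : ℝ) (n : ℕ) (c : ℝ)
    (hc : ∀ y : Fin n → ℝ, ENNReal.ofReal c ≤
      ∫⁻ x : ℝ, ENNReal.ofReal ((∏ i : Fin n, |x - y i| ^ β) * Real.exp (-(V x)))) :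
    ENNReal.ofReal c * (∫⁻ y : Fin n → ℝ, ENNReal.ofReal (betaWeight V β n y)) ≤
      ∫⁻ lam : Fin (n+1) → ℝ, ENNReal.ofReal (betaWeight V β (n+1) lam) := by
  have hmp := MeasureTheory.volume_preserving_piFinSuccAbove
    (fun _ : Fin (n+1) => ℝ) (Fin.last n)
  have hWm : Measurable (fun lam => ENNReal.ofReal (betaWeight V β (n+1) lam)) :=
    (measurable_betaWeight V hV β (n+1)).ennreal_ofReal
  -- transfer to the product space
  have h1 : ∫⁻ lam : Fin (n+1) → ℝ, ENNReal.ofReal (betaWeight V β (n+1) lam)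
      = ∫⁻ p : ℝ × (Fin n → ℝ),
          ENNReal.ofReal (betaWeight V β (n+1) (Fin.snoc p.2 p.1)) := by
    rw [← (hmp.symm _).lintegral_comp hWm]
    apply lintegral_congr
    intro p
    have hsymm : ((MeasurableEquiv.piFinSuccAbove (fun _ : Fin (n+1) => ℝ) (Fin.last n)).symm p)
        = (Fin.snoc p.2 p.1 : Fin (n+1) → ℝ) := by
      show ((Fin.insertNthEquiv (fun _ : Fin (n+1) => ℝ) (Fin.last n)).symm.symm) p
        = (Fin.snoc p.2 p.1 : Fin (n+1) → ℝ)
      rw [Equiv.symm_symm, Fin.insertNthEquiv_last]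
      rfl
    rw [hsymm]
  rw [h1]
  have hGm : Measurable (fun p : ℝ × (Fin n → ℝ) =>
      ENNReal.ofReal (betaWeight V β (n+1) (Fin.snoc p.2 p.1))) :=
    ((measurable_betaWeight V hV β (n+1)).comp (measurable_snocmap n)).ennreal_ofReal
  rw [MeasureTheory.Measure.volume_eq_prod]
  rw [lintegral_prod _ hGm.aemeasurable]
  rw [lintegral_lintegral_swap (by exact hGm.aemeasurable)]
  have h2 : ∀ y : Fin n → ℝ,
      ENNReal.ofReal c * ENNReal.ofReal (betaWeight V β n y) ≤
        ∫⁻ x : ℝ, ENNReal.ofReal (betaWeight V β (n+1) (Fin.snoc y x)) := by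
    intro y
    have h3 : ∀ x : ℝ, ENNReal.ofReal (betaWeight V β (n+1) (Fin.snoc y x))
        = ENNReal.ofReal (betaWeight V β n y) *
          ENNReal.ofReal ((∏ i : Fin n, |x - y i| ^ β) * Real.exp (-(V x))) := by
      intro x
      rw [betaWeight_snoc, ENNReal.ofReal_mul (betaWeight_nonneg V β n y)]
    simp_rw [h3]
    rw [lintegral_const_mul' _ _ ENNReal.ofReal_ne_top]
    rw [mul_comm (ENNReal.ofReal c)]
    exact mul_le_mul_right (hc y) _
  calc ENNReal.ofReal c * ∫⁻ y : Fin n → ℝ, ENNReal.ofReal (betaWeight V β n y)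
      = ∫⁻ y : Fin n → ℝ, ENNReal.ofReal c * ENNReal.ofReal (betaWeight V β n y) :=
        (lintegral_const_mul' _ _ ENNReal.ofReal_ne_top).symm
    _ ≤ ∫⁻ y : Fin n → ℝ, ∫⁻ x : ℝ,
          ENNReal.ofReal (betaWeight V β (n+1) (Fin.snoc y x)) :=
        lintegral_mono h2

lemma key (V : ℝ → ℝ) (hV : Measurable V) (κ : ℝ) :
    ∃ c : ℝ, 0 < c ∧ ∀ (β : ℝ) (n : ℕ) (y : Fin n → ℝ), 0 < β → β * n ≤ κ →
      ENNReal.ofReal c ≤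
        ∫⁻ x : ℝ, ENNReal.ofReal ((∏ i : Fin n, |x - y i| ^ β) * Real.exp (-(V x))) := by
  obtain ⟨δ, hδ, hδ4⟩ := exists_delta V hV
  refine ⟨Real.exp (-(4*κ)) * δ / 4, by positivity, ?_⟩
  intro β n y hβ hβn
  set μ01 := volume.restrict (Set.Icc (0:ℝ) 1) with hμ01
  set S : ℝ → ℝ := fun x => ∑ i : Fin n, nlog (y i) x with hSdef
  have hSmeas : Measurable S := Finset.measurable_sum _ fun i _ => measurable_nlog (y i)
  have hSnn : ∀ x, 0 ≤ S x := fun x => Finset.sum_nonneg fun i _ => nlog_nonneg _ _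
  set T : ℝ := max (4*(n:ℝ)) 1 with hTdef
  set B1 : Set ℝ := {x : ℝ | T ≤ S x} with hB1def
  set B2 : Set ℝ := {x : ℝ | Real.exp (-V x) < δ} with hB2def
  set B3 : Set ℝ := ⋃ i : Fin n, {y i} with hB3def
  have hB1m : MeasurableSet B1 := measurableSet_le measurable_const hSmeas
  have hB2m : MeasurableSet B2 := measurableSet_lt (hV.neg.exp) measurable_const
  have hB3m : MeasurableSet B3 := MeasurableSet.iUnion fun i => measurableSet_singleton _
  have hBm : MeasurableSet (B1 ∪ B2 ∪ B3) := (hB1m.union hB2m).union hB3m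
  -- bound on B1
  have hμB1 : μ01 B1 ≤ ENNReal.ofReal (1/2) := by
    by_cases hn : n = 0
    · have hB1empty : B1 = ∅ := by
        ext x
        simp only [hB1def, Set.mem_setOf_eq, Set.mem_empty_iff_false, iff_false, not_le]
        have h0 : S x = 0 := by subst hn; simp [hSdef]
        have h1 : (1:ℝ) ≤ T := le_max_right _ _
        linarith
      simp [hB1empty]
    · have hn1 : 1 ≤ (n:ℝ) := Nat.one_le_cast.mpr (Nat.one_le_iff_ne_zero.mpr hn)
      have hT : T = 4*(n:ℝ) := max_eq_left (by linarith)
      have hB1eq : B1 = {x | ENNReal.ofReal (4*(n:ℝ)) ≤ ENNReal.ofReal (S x)} := by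
        ext x
        simp only [hB1def, Set.mem_setOf_eq, hT, ENNReal.ofReal_le_ofReal_iff (hSnn x)]
      rw [hB1eq]
      have hmark := meas_ge_le_lintegral_div (μ := μ01)
        (f := fun x => ENNReal.ofReal (S x)) (hSmeas.ennreal_ofReal.aemeasurable)
        (ε := ENNReal.ofReal (4*(n:ℝ)))
        (ne_of_gt (ENNReal.ofReal_pos.mpr (by linarith))) ENNReal.ofReal_ne_top
      refine le_trans hmark ?_
      have hsum : ∫⁻ x, ENNReal.ofReal (S x) ∂μ01 ≤ ENNReal.ofReal (2*(n:ℝ)) := by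
        have hof : ∀ x, ENNReal.ofReal (S x) = ∑ i : Fin n, ENNReal.ofReal (nlog (y i) x) :=
          fun x => ENNReal.ofReal_sum_of_nonneg (fun i _ => nlog_nonneg _ _)
        calc ∫⁻ x, ENNReal.ofReal (S x) ∂μ01
            = ∑ i : Fin n, ∫⁻ x, ENNReal.ofReal (nlog (y i) x) ∂μ01 := by
              simp_rw [hof]
              exact lintegral_finset_sum _ (fun i _ => (measurable_nlog (y i)).ennreal_ofReal)
          _ ≤ ∑ i : Fin n, ENNReal.ofReal 2 :=
              Finset.sum_le_sum fun i _ => lintegral_nlog_le (y i)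
          _ = (n : ENNReal) * ENNReal.ofReal 2 := by
              simp [Finset.sum_const, Finset.card_univ, nsmul_eq_mul]
          _ = ENNReal.ofReal (2*(n:ℝ)) := by
              rw [← ENNReal.ofReal_natCast n, ← ENNReal.ofReal_mul (by positivity)]
              ring_nf
      refine le_trans (ENNReal.div_le_div_right hsum _) ?_
      apply ENNReal.div_le_of_le_mul
      rw [← ENNReal.ofReal_mul (by norm_num)]
      apply ENNReal.ofReal_le_ofReal
      linarith
  have hμB2 : μ01 B2 ≤ ENNReal.ofReal (1/4) := by
    rw [hμ01, Measure.restrict_apply hB2m]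
    exact hδ4
  have hμB3 : μ01 B3 = 0 := by
    apply le_antisymm _ zero_le
    have hvol : volume B3 = 0 := measure_iUnion_null fun i => volume_singleton
    calc μ01 B3 ≤ volume B3 := Measure.restrict_le_self _
      _ = 0 := hvol
  have hμB : μ01 (B1 ∪ B2 ∪ B3) ≤ ENNReal.ofReal (3/4) := by
    calc μ01 (B1 ∪ B2 ∪ B3) ≤ μ01 (B1 ∪ B2) + μ01 B3 := measure_union_le _ _
      _ = μ01 (B1 ∪ B2) := by rw [hμB3, add_zero]
      _ ≤ μ01 B1 + μ01 B2 := measure_union_le _ _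
      _ ≤ ENNReal.ofReal (1/2) + ENNReal.ofReal (1/4) := add_le_add hμB1 hμB2
      _ = ENNReal.ofReal (3/4) := by
          rw [← ENNReal.ofReal_add (by norm_num) (by norm_num)]
          norm_num
  have hμuniv : μ01 Set.univ = ENNReal.ofReal 1 := by
    rw [hμ01, Measure.restrict_apply_univ, Real.volume_Icc]
    norm_num
  have hμBfin : μ01 (B1 ∪ B2 ∪ B3) ≠ ⊤ :=
    (lt_of_le_of_lt (le_trans (measure_mono (Set.subset_univ _)) hμuniv.le)
      ENNReal.ofReal_lt_top).ne
  have hgood : ENNReal.ofReal (1/4) ≤ μ01 ((B1 ∪ B2 ∪ B3)ᶜ) := by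
    rw [measure_compl hBm hμBfin, hμuniv]
    calc ENNReal.ofReal (1/4) = ENNReal.ofReal 1 - ENNReal.ofReal (3/4) := by
          rw [← ENNReal.ofReal_sub _ (by norm_num)]
          norm_num
      _ ≤ ENNReal.ofReal 1 - μ01 (B1 ∪ B2 ∪ B3) := tsub_le_tsub_left hμB _
  -- pointwise bound on the good set
  have hpt : ∀ x ∈ (B1 ∪ B2 ∪ B3)ᶜ,
      Real.exp (-(4*κ)) * δ ≤ (∏ i : Fin n, |x - y i| ^ β) * Real.exp (-(V x)) := by
    intro x hx
    simp only [Set.mem_compl_iff, Set.mem_union, not_or] at hx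
    obtain ⟨⟨hx1, hx2⟩, hx3⟩ := hx
    have hx1' : S x < T := not_le.mp hx1
    have hx2' : δ ≤ Real.exp (-V x) := not_lt.mp hx2
    have hx3' : ∀ i, x ≠ y i := by
      intro i hi
      apply hx3
      rw [hB3def]
      exact Set.mem_iUnion.mpr ⟨i, hi⟩
    have hS4n : S x ≤ 4*(n:ℝ) := by
      by_cases hn : n = 0
      · have h0 : S x = 0 := by subst hn; simp [hSdef]
        rw [h0]; subst hn; simp
      · have hn1 : 1 ≤ (n:ℝ) := Nat.one_le_cast.mpr (Nat.one_le_iff_ne_zero.mpr hn)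
        have hT : T = 4*(n:ℝ) := max_eq_left (by linarith)
        linarith [hx1']
    have hprod : Real.exp (-(β * S x)) ≤ ∏ i : Fin n, |x - y i| ^ β := by
      have hexp : Real.exp (-(β * S x)) = ∏ i : Fin n, Real.exp (-(β * nlog (y i) x)) := by
        rw [← Real.exp_sum]
        congr 1
        rw [hSdef]
        rw [Finset.mul_sum, ← Finset.sum_neg_distrib]
      rw [hexp]
      apply Finset.prod_le_prod (fun i _ => (Real.exp_pos _).le)
      intro i _
      have hr0 : 0 < |x - y i| := abs_pos.mpr (sub_ne_zero.mpr (hx3' i))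
      rcases le_or_gt 1 |x - y i| with h1 | h1
      · have hle1 : Real.exp (-(β * nlog (y i) x)) ≤ 1 := by
          apply Real.exp_le_one_iff.mpr
          have := nlog_nonneg (y i) x
          nlinarith
        have h2 : (1:ℝ) ≤ |x - y i| ^ β := Real.one_le_rpow h1 hβ.le
        linarith
      · have hlogneg : Real.log |x - y i| < 0 := Real.log_neg hr0 h1
        have hnl : nlog (y i) x = -Real.log |x - y i| := max_eq_left (by linarith)
        rw [hnl, Real.rpow_def_of_pos hr0]
        apply le_of_eq
        congr 1
        ring
    have h4 : Real.exp (-(4*κ)) ≤ Real.exp (-(β * S x)) := by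
      apply Real.exp_le_exp.mpr
      have hc : β * S x ≤ 4*κ := by
        calc β * S x ≤ β * (4*(n:ℝ)) := mul_le_mul_of_nonneg_left hS4n hβ.le
          _ = 4*(β*(n:ℝ)) := by ring
          _ ≤ 4*κ := by linarith
      linarith
    have hprodnn : (0:ℝ) ≤ ∏ i : Fin n, |x - y i| ^ β :=
      Finset.prod_nonneg fun i _ => Real.rpow_nonneg (abs_nonneg _) _
    calc Real.exp (-(4*κ)) * δ ≤ (∏ i : Fin n, |x - y i| ^ β) * δ := by
          apply mul_le_mul_of_nonneg_right (le_trans h4 hprod) hδ.le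
      _ ≤ (∏ i : Fin n, |x - y i| ^ β) * Real.exp (-(V x)) := by
          apply mul_le_mul_of_nonneg_left hx2' hprodnn
  -- assemble
  calc ENNReal.ofReal (Real.exp (-(4*κ)) * δ / 4)
      = ENNReal.ofReal (Real.exp (-(4*κ)) * δ) * ENNReal.ofReal (1/4) := by
        rw [← ENNReal.ofReal_mul (by positivity)]
        ring_nf
    _ ≤ ENNReal.ofReal (Real.exp (-(4*κ)) * δ) * μ01 ((B1 ∪ B2 ∪ B3)ᶜ) :=
        mul_le_mul_right hgood _
    _ = ∫⁻ _x in (B1 ∪ B2 ∪ B3)ᶜ, ENNReal.ofReal (Real.exp (-(4*κ)) * δ) ∂μ01 :=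
        (setLIntegral_const _ _).symm
    _ ≤ ∫⁻ x in (B1 ∪ B2 ∪ B3)ᶜ,
          ENNReal.ofReal ((∏ i : Fin n, |x - y i| ^ β) * Real.exp (-(V x))) ∂μ01 :=
        setLIntegral_mono' hBm.compl (fun x hx => ENNReal.ofReal_le_ofReal (hpt x hx))
    _ ≤ ∫⁻ x, ENNReal.ofReal ((∏ i : Fin n, |x - y i| ^ β) * Real.exp (-(V x))) ∂μ01 :=
        setLIntegral_le_lintegral _ _
    _ ≤ ∫⁻ x, ENNReal.ofReal ((∏ i : Fin n, |x - y i| ^ β) * Real.exp (-(V x))) := by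
        apply lintegral_mono' (Measure.restrict_le_self) le_rfl

end BetaAux

theorem stmt7
    (V : ℝ → ℝ) (hVmeas : Measurable V) (hVbdd : BddBelow (Set.range V))
    (hVtop : Tendsto (fun x => V x / Real.log (1 + x ^ 2)) atTop atTop)
    (hVbot : Tendsto (fun x => V x / Real.log (1 + x ^ 2)) atBot atTop)
    (κ : ℝ) (hκ : 0 < κ) :
    ∃ C : ℝ, 0 < C ∧ ∀ (β : ℝ) (N : ℕ), 0 < β → 2 ≤ N → β * N ≤ κ →
      Zpart V β (N - 1) / Zpart V β N ≤ C := by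
  obtain ⟨c, hc0, hkey⟩ := BetaAux.key V hVmeas κ
  refine ⟨max 1 (1/c), lt_of_lt_of_le one_pos (le_max_left _ _), ?_⟩
  intro β N hβ hN hβN
  set n := N - 1 with hn
  have hNn : N = n + 1 := by omega
  have hZN_nonneg : 0 ≤ Zpart V β N :=
    integral_nonneg fun lam => BetaAux.betaWeight_nonneg V β N lam
  have hZn_nonneg : 0 ≤ Zpart V β n :=
    integral_nonneg fun lam => BetaAux.betaWeight_nonneg V β n lam
  rcases eq_or_lt_of_le hZN_nonneg with hz | hz
  · rw [← hz, div_zero]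
    exact le_trans zero_le_one (le_max_left _ _)
  · set L : ℕ → ENNReal :=
      fun k => ∫⁻ lam : Fin k → ℝ, ENNReal.ofReal (betaWeight V β k lam) with hL
    have hZeq : ∀ k, Zpart V β k = (L k).toReal := by
      intro k
      rw [Zpart, integral_eq_lintegral_of_nonneg_ae
        (Eventually.of_forall fun lam => BetaAux.betaWeight_nonneg V β k lam)
        (BetaAux.measurable_betaWeight V hVmeas β k).aestronglyMeasurable]
    have hstep : ENNReal.ofReal c * L n ≤ L (n+1) := by
      apply BetaAux.L_step V hVmeas β n c
      intro y
      apply hkey β n y hβ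
      have hcast : (n:ℝ) ≤ (N:ℝ) := Nat.cast_le.mpr (by omega)
      nlinarith [hβ.le]
    rw [← hNn] at hstep
    have hLN_pos : 0 < L N ∧ L N < ⊤ := ENNReal.toReal_pos_iff.mp (by rw [← hZeq]; exact hz)
    have hreal : c * Zpart V β n ≤ Zpart V β N := by
      rw [hZeq n, hZeq N]
      have hmono := ENNReal.toReal_mono hLN_pos.2.ne hstep
      rwa [ENNReal.toReal_mul, ENNReal.toReal_ofReal hc0.le] at hmono
    rw [div_le_iff₀ hz]
    have h1c : Zpart V β n ≤ (1/c) * Zpart V β N := by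
      have h2 : Zpart V β n ≤ Zpart V β N / c := (le_div_iff₀' hc0).mpr hreal
      rw [one_div, inv_mul_eq_div]
      exact h2
    calc Zpart V β n ≤ (1/c) * Zpart V β N := h1c
      _ ≤ max 1 (1/c) * Zpart V β N :=
          mul_le_mul_of_nonneg_right (le_max_right _ _) hZN_nonneg
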